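/- For every odd dimension d ≥ 3 and every real r with 1/√(d−1) ≤ r ≤ √((d−2)/2), there exists a d×d complex density matrix ρ with S_R(ρ) = r and S_I(ρ)² = 1 + r² (i.e., the quadratic bound S_I² ≤ 1 + S_R² is saturated in odd dimensions whenever S_R ≥ 1/√(d−1)). -/

import Mathlib

open Matrix
open scoped ComplexOrder

noncomputable section

/-- A density matrix: positive semidefinite with unit trace. -/
def IsDensityMatrix {d : ℕ} (ρ : Matrix (Fin d) (Fin d) ℂ) : Prop :=
  ρ.PosSemidef ∧ ρ.trace = 1

/-- The real part `R = (d/2)(ρ + ρᵀ)`. -/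
def Rpart (d : ℕ) (ρ : Matrix (Fin d) (Fin d) ℂ) : Matrix (Fin d) (Fin d) ℂ :=
  ((d : ℂ) / 2) • (ρ + ρ.transpose)

/-- The imaginary part `I = (d/2)(ρ − ρᵀ)`. -/
def Ipart (d : ℕ) (ρ : Matrix (Fin d) (Fin d) ℂ) : Matrix (Fin d) (Fin d) ℂ :=
  ((d : ℂ) / 2) • (ρ - ρ.transpose)

/-- `S_R = √(Tr(R²)/d − 1)`. -/
def SR (d : ℕ) (ρ : Matrix (Fin d) (Fin d) ℂ) : ℝ :=
  Real.sqrt ((Rpart d ρ * Rpart d ρ).trace.re / d - 1)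

/-- `S_I = √(Tr(I²)/d)`. -/
def SI (d : ℕ) (ρ : Matrix (Fin d) (Fin d) ℂ) : ℝ :=
  Real.sqrt ((Ipart d ρ * Ipart d ρ).trace.re / d)

/-! ### Auxiliary lemmas -/

lemma sum_eq_add_of_support {α M : Type*} [Fintype α] [DecidableEq α] [AddCommMonoid M]
    (f : α → M) (i0 i1 : α) (h01 : i0 ≠ i1)
    (h : ∀ x, x ≠ i0 → x ≠ i1 → f x = 0) :
    ∑ x, f x = f i0 + f i1 := by
  rw [← Finset.sum_subset (Finset.subset_univ ({i0, i1} : Finset α))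
      (fun x _ hx => h x (fun e => hx (by simp [e])) (fun e => hx (by simp [e])))]
  exact Finset.sum_pair h01

noncomputable def Avec (d k : ℕ) (w : Fin k → ℝ) : Matrix (Fin d) (Fin k) ℂ :=
  fun x j => if (x : ℕ) = 2 * (j : ℕ) then ((Real.sqrt (w j / 2) : ℝ) : ℂ)
    else if (x : ℕ) = 2 * (j : ℕ) + 1 then ((Real.sqrt (w j / 2) : ℝ) : ℂ) * Complex.I else 0

lemma Avec_ct_mul {d k : ℕ} (hdk : d = 2 * k + 1) (w : Fin k → ℝ) (hw : ∀ j, 0 ≤ w j) :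
    (Avec d k w)ᴴ * Avec d k w = Matrix.diagonal (fun j => ((w j : ℝ) : ℂ)) := by
  ext j j'
  rw [Matrix.mul_apply]
  simp only [Matrix.conjTranspose_apply]
  by_cases hjj : j = j'
  · subst hjj
    have hjk : (j : ℕ) < k := j.isLt
    set i0 : Fin d := ⟨2 * (j : ℕ), by omega⟩ with hi0
    set i1 : Fin d := ⟨2 * (j : ℕ) + 1, by omega⟩ with hi1
    rw [sum_eq_add_of_support _ i0 i1 (by simp [hi0, hi1, Fin.ext_iff])
        (by
          intro x hx0 hx1
          have hv0 : (x : ℕ) ≠ 2 * (j : ℕ) := fun e => hx0 (Fin.ext e)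
          have hv1 : (x : ℕ) ≠ 2 * (j : ℕ) + 1 := fun e => hx1 (Fin.ext e)
          simp [Avec, hv0, hv1])]
    have h1 : (2 * (j : ℕ) + 1) ≠ 2 * (j : ℕ) := by omega
    have e0 : Avec d k w i0 j = ((Real.sqrt (w j / 2) : ℝ) : ℂ) := by simp [Avec, hi0]
    have e1 : Avec d k w i1 j = ((Real.sqrt (w j / 2) : ℝ) : ℂ) * Complex.I := by
      simp [Avec, hi1, h1]
    rw [e0, e1, Matrix.diagonal_apply_eq]
    simp only [Complex.star_def, _root_.map_mul, Complex.conj_ofReal, Complex.conj_I]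
    have hs : ((Real.sqrt (w j / 2) : ℝ) : ℂ) * ((Real.sqrt (w j / 2) : ℝ) : ℂ)
        = (((w j / 2 : ℝ)) : ℂ) := by
      rw [← Complex.ofReal_mul, Real.mul_self_sqrt (by linarith [hw j])]
    have hI : Complex.I * Complex.I = -1 := Complex.I_mul_I
    calc ((Real.sqrt (w j / 2) : ℝ) : ℂ) * ((Real.sqrt (w j / 2) : ℝ) : ℂ)
          + ((Real.sqrt (w j / 2) : ℝ) : ℂ) * -Complex.I
            * (((Real.sqrt (w j / 2) : ℝ) : ℂ) * Complex.I)
        = ((Real.sqrt (w j / 2) : ℝ) : ℂ) * ((Real.sqrt (w j / 2) : ℝ) : ℂ)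
          - ((Real.sqrt (w j / 2) : ℝ) : ℂ) * ((Real.sqrt (w j / 2) : ℝ) : ℂ)
            * (Complex.I * Complex.I) := by ring
      _ = ((w j : ℝ) : ℂ) := by rw [hs, hI]; push_cast; ring
  · have hv : (j : ℕ) ≠ (j' : ℕ) := fun e => hjj (Fin.ext e)
    rw [Matrix.diagonal_apply_ne _ hjj]
    apply Finset.sum_eq_zero
    intro x _
    simp only [Avec]
    split_ifs <;> first
      | (exfalso; omega)
      | simp

lemma Avec_t_mul {d k : ℕ} (hdk : d = 2 * k + 1) (w : Fin k → ℝ) :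
    (Avec d k w)ᵀ * Avec d k w = 0 := by
  ext j j'
  rw [Matrix.mul_apply]
  simp only [Matrix.transpose_apply, Matrix.zero_apply]
  by_cases hjj : j = j'
  · subst hjj
    have hjk : (j : ℕ) < k := j.isLt
    set i0 : Fin d := ⟨2 * (j : ℕ), by omega⟩ with hi0
    set i1 : Fin d := ⟨2 * (j : ℕ) + 1, by omega⟩ with hi1
    rw [sum_eq_add_of_support _ i0 i1 (by simp [hi0, hi1, Fin.ext_iff])
        (by
          intro x hx0 hx1
          have hv0 : (x : ℕ) ≠ 2 * (j : ℕ) := fun e => hx0 (Fin.ext e)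
          have hv1 : (x : ℕ) ≠ 2 * (j : ℕ) + 1 := fun e => hx1 (Fin.ext e)
          simp [Avec, hv0, hv1])]
    have h1 : (2 * (j : ℕ) + 1) ≠ 2 * (j : ℕ) := by omega
    have e0 : Avec d k w i0 j = ((Real.sqrt (w j / 2) : ℝ) : ℂ) := by simp [Avec, hi0]
    have e1 : Avec d k w i1 j = ((Real.sqrt (w j / 2) : ℝ) : ℂ) * Complex.I := by
      simp [Avec, hi1, h1]
    rw [e0, e1]
    have hI : Complex.I * Complex.I = -1 := Complex.I_mul_I
    calc ((Real.sqrt (w j / 2) : ℝ) : ℂ) * ((Real.sqrt (w j / 2) : ℝ) : ℂ)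
          + ((Real.sqrt (w j / 2) : ℝ) : ℂ) * Complex.I
            * (((Real.sqrt (w j / 2) : ℝ) : ℂ) * Complex.I)
        = ((Real.sqrt (w j / 2) : ℝ) : ℂ) * ((Real.sqrt (w j / 2) : ℝ) : ℂ)
          * (1 + Complex.I * Complex.I) := by ring
      _ = 0 := by rw [hI]; ring
  · have hv : (j : ℕ) ≠ (j' : ℕ) := fun e => hjj (Fin.ext e)
    apply Finset.sum_eq_zero
    intro x _
    simp only [Avec]
    split_ifs <;> first
      | (exfalso; omega)
      | simp

/-- For every odd dimension `d ≥ 3` and every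
`1/√(d−1) ≤ r ≤ √((d−2)/2)`, there is a `d×d` density matrix with
`S_R = r` and `S_I² = 1 + r²`. -/
theorem quadratic_bound_saturated_odd (d : ℕ) (hd : 3 ≤ d) (hdodd : Odd d)
    (r : ℝ) (hr0 : 1 / Real.sqrt ((d : ℝ) - 1) ≤ r)
    (hr1 : r ≤ Real.sqrt (((d : ℝ) - 2) / 2)) :
    ∃ ρ : Matrix (Fin d) (Fin d) ℂ, IsDensityMatrix ρ ∧
      SR d ρ = r ∧ SI d ρ ^ 2 = 1 + r ^ 2 := by
  obtain ⟨k, hk⟩ : ∃ k, d = 2 * k + 1 := by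
    obtain ⟨m, hm⟩ := hdodd; exact ⟨m, by omega⟩
  have hk1 : 1 ≤ k := by omega
  have hKpos : (0 : ℝ) < (k : ℝ) := by exact_mod_cast Nat.pos_of_ne_zero (by omega)
  have hDpos : (0 : ℝ) < (d : ℝ) := by exact_mod_cast (by omega : 0 < d)
  have hD : (d : ℝ) = 2 * (k : ℝ) + 1 := by rw [hk]; push_cast; ring
  have hd1 : (0 : ℝ) < (d : ℝ) - 1 := by rw [hD]; linarith
  have hrpos : 0 < r := lt_of_lt_of_le (by positivity) hr0
  have hrsq_lb : 1 / ((d : ℝ) - 1) ≤ r ^ 2 := by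
    have h := mul_le_mul hr0 hr0 (by positivity) hrpos.le
    calc 1 / ((d:ℝ) - 1) = (1 / Real.sqrt ((d:ℝ) - 1)) * (1 / Real.sqrt ((d:ℝ) - 1)) := by
          rw [div_mul_div_comm, one_mul, Real.mul_self_sqrt hd1.le]
      _ ≤ r * r := h
      _ = r ^ 2 := (sq r).symm
  have hrsq_ub : r ^ 2 ≤ ((d : ℝ) - 2) / 2 := by
    have h := mul_le_mul hr1 hr1 hrpos.le (Real.sqrt_nonneg _)
    calc r ^ 2 = r * r := sq r
      _ ≤ Real.sqrt (((d:ℝ) - 2) / 2) * Real.sqrt (((d:ℝ) - 2) / 2) := h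
      _ = ((d:ℝ) - 2) / 2 := Real.mul_self_sqrt (by
            have hK1' : (1:ℝ) ≤ (k:ℝ) := by exact_mod_cast hk1
            rw [hD]; linarith)
  set c : ℝ := 2 * (1 + r ^ 2) / d with hc
  have h1 : (1 : ℝ) ≤ r ^ 2 * (2 * (k : ℝ)) := by
    rw [hD] at hrsq_lb
    have h2k : (0:ℝ) < 2 * (k:ℝ) := by linarith
    rw [show (2 : ℝ) * (k:ℝ) + 1 - 1 = 2 * (k:ℝ) by ring, div_le_iff₀ h2k] at hrsq_lb
    linarith
  have hc_lb : 1 / (k : ℝ) ≤ c := by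
    rw [hc, div_le_div_iff₀ hKpos hDpos, hD]
    nlinarith
  have hc_ub : c ≤ 1 := by
    rw [hc, div_le_one hDpos]
    linarith
  obtain ⟨t, ht0, ht1, htc⟩ : ∃ t : ℝ, 0 ≤ t ∧ t ≤ 1 ∧ t ^ 2 + (1 - t ^ 2) / (k : ℝ) = c := by
    rcases eq_or_lt_of_le hk1 with h1' | h2'
    · have hK1 : (k : ℝ) = 1 := by exact_mod_cast h1'.symm
      have hceq : c = 1 := le_antisymm hc_ub (by simpa [hK1] using hc_lb)
      exact ⟨0, le_refl _, zero_le_one, by simp [hK1, hceq]⟩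
    · have hK2 : (2 : ℝ) ≤ (k : ℝ) := by exact_mod_cast h2'
      have hKm1 : (0 : ℝ) < (k : ℝ) - 1 := by linarith
      have hnum : 0 ≤ c * (k : ℝ) - 1 := by
        rw [div_le_iff₀ hKpos] at hc_lb; linarith
      refine ⟨Real.sqrt ((c * (k:ℝ) - 1) / ((k:ℝ) - 1)), Real.sqrt_nonneg _, ?_, ?_⟩
      · have hle : (c * (k:ℝ) - 1) / ((k:ℝ) - 1) ≤ 1 := by
          rw [div_le_one hKm1]
          nlinarith
        calc Real.sqrt ((c * (k:ℝ) - 1) / ((k:ℝ) - 1)) ≤ Real.sqrt 1 := Real.sqrt_le_sqrt hle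
          _ = 1 := Real.sqrt_one
      · rw [Real.sq_sqrt (by positivity)]
        field_simp
        ring
  set z : Fin k := ⟨0, by omega⟩ with hz
  set w : Fin k → ℝ := fun j => (1 - t) / (k : ℝ) + if j = z then t else 0 with hwdef
  have ha0 : 0 ≤ (1 - t) / (k : ℝ) := div_nonneg (by linarith) hKpos.le
  have hw0 : ∀ j, 0 ≤ w j := by
    intro j
    simp only [hwdef]
    split_ifs <;> linarith
  have hsum1 : ∑ j, w j = 1 := by
    simp only [hwdef]
    rw [Finset.sum_add_distrib, Finset.sum_const, Finset.sum_ite_eq' Finset.univ z (fun _ => t)]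
    simp only [Finset.card_univ, Fintype.card_fin, Finset.mem_univ, if_true, nsmul_eq_mul]
    field_simp
    ring
  have hsum2 : ∑ j, w j ^ 2 = c := by
    have hterm : ∀ j, w j ^ 2 = ((1 - t)/(k:ℝ))^2
        + (if j = z then 2 * ((1 - t)/(k:ℝ)) * t + t^2 else 0) := by
      intro j
      simp only [hwdef]
      split_ifs <;> ring
    rw [Finset.sum_congr rfl (fun j _ => hterm j), Finset.sum_add_distrib, Finset.sum_const,
      Finset.sum_ite_eq' Finset.univ z (fun _ => 2 * ((1 - t)/(k:ℝ)) * t + t^2)]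
    simp only [Finset.card_univ, Fintype.card_fin, Finset.mem_univ, if_true, nsmul_eq_mul]
    rw [← htc]
    field_simp
    ring
  set A := Avec d k w with hA
  have hAct : Aᴴ * A = Matrix.diagonal (fun j => ((w j : ℝ) : ℂ)) := Avec_ct_mul hk w hw0
  have hAt : Aᵀ * A = 0 := Avec_t_mul hk w
  have htrρ : (A * Aᴴ).trace = 1 := by
    rw [Matrix.trace_mul_comm, hAct, Matrix.trace_diagonal]
    rw [show (∑ j, ((w j : ℝ) : ℂ)) = ((∑ j, w j : ℝ) : ℂ) by push_cast; rfl, hsum1]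
    norm_num
  have hassoc : (A * Aᴴ) * (A * Aᴴ) = A * ((Aᴴ * A) * Aᴴ) := by
    rw [Matrix.mul_assoc, ← Matrix.mul_assoc Aᴴ A Aᴴ]
  have htr2 : ((A * Aᴴ) * (A * Aᴴ)).trace = ((c : ℝ) : ℂ) := by
    rw [hassoc, Matrix.trace_mul_comm, Matrix.mul_assoc (Aᴴ * A) Aᴴ A, hAct, Matrix.diagonal_mul_diagonal,
      Matrix.trace_diagonal]
    have hsq : ∀ j : Fin k, ((w j : ℝ) : ℂ) * ((w j : ℝ) : ℂ) = (((w j) ^ 2 : ℝ) : ℂ) := by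
      intro j; push_cast; ring
    rw [Finset.sum_congr rfl (fun j _ => hsq j), ← Complex.ofReal_sum, hsum2]
  have hconj : Aᴴ * Aᴴᵀ = 0 := by
    ext j j'
    have h0 : (Aᵀ * A) j j' = 0 := by rw [hAt]; rfl
    rw [Matrix.mul_apply] at h0
    rw [Matrix.mul_apply]
    simp only [Matrix.transpose_apply, Matrix.conjTranspose_apply] at h0 ⊢
    calc (∑ x, star (A x j) * star (A x j')) = star (∑ x, A x j * A x j') := by
          rw [star_sum]
          exact Finset.sum_congr rfl fun x _ => (star_mul' _ _).symm
      _ = 0 := by rw [h0]; exact star_zero _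
  have hρT : (A * Aᴴ) * (A * Aᴴ)ᵀ = 0 := by
    rw [Matrix.transpose_mul]
    calc A * Aᴴ * (Aᴴᵀ * Aᵀ) = A * ((Aᴴ * Aᴴᵀ) * Aᵀ) := by
          rw [Matrix.mul_assoc, ← Matrix.mul_assoc Aᴴ Aᴴᵀ Aᵀ]
      _ = 0 := by rw [hconj]; simp
  have htrT : ((A * Aᴴ) * (A * Aᴴ)ᵀ).trace = 0 := by rw [hρT, Matrix.trace_zero]
  have htrT2 : ((A * Aᴴ)ᵀ * (A * Aᴴ)).trace = 0 := by rw [Matrix.trace_mul_comm, htrT]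
  have htrTT : ((A * Aᴴ)ᵀ * (A * Aᴴ)ᵀ).trace = ((c : ℝ) : ℂ) := by
    rw [← Matrix.transpose_mul, Matrix.trace_transpose, htr2]
  have hRtr : (Rpart d (A * Aᴴ) * Rpart d (A * Aᴴ)).trace = (((d:ℝ)^2 / 2 * c : ℝ) : ℂ) := by
    unfold Rpart
    rw [smul_mul_assoc, mul_smul_comm, smul_smul, Matrix.trace_smul, smul_eq_mul]
    rw [add_mul, mul_add, mul_add, Matrix.trace_add, Matrix.trace_add, Matrix.trace_add]
    rw [htr2, htrT, htrT2, htrTT]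
    push_cast
    ring
  have hItr : (Ipart d (A * Aᴴ) * Ipart d (A * Aᴴ)).trace = (((d:ℝ)^2 / 2 * c : ℝ) : ℂ) := by
    unfold Ipart
    rw [smul_mul_assoc, mul_smul_comm, smul_smul, Matrix.trace_smul, smul_eq_mul]
    rw [sub_mul, mul_sub, mul_sub, Matrix.trace_sub, Matrix.trace_sub, Matrix.trace_sub]
    rw [htr2, htrT, htrT2, htrTT]
    push_cast
    ring
  have hcval : (d:ℝ)^2 / 2 * c / d - 1 = r ^ 2 := by
    rw [hc]; field_simp; ring
  have hcval2 : (d:ℝ)^2 / 2 * c / d = 1 + r ^ 2 := by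
    rw [hc]; field_simp
  refine ⟨A * Aᴴ, ⟨Matrix.posSemidef_self_mul_conjTranspose A, htrρ⟩, ?_, ?_⟩
  · unfold SR
    rw [hRtr, Complex.ofReal_re, hcval, Real.sqrt_sq hrpos.le]
  · unfold SI
    rw [hItr, Complex.ofReal_re, hcval2, Real.sq_sqrt (by positivity)]
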